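/- The family of functions F : D³ → closure(D) of the form F(z₁,z₂,z₃) = F₁(F₂(z₁,z₂), z₃) with F₁, F₂ : D² → closure(D) holomorphic is closed under locally uniform limits: if F^{(n)} is a sequence of such functions converging locally uniformly on D³ to F, then F is also of this form (possibly with F₁ or F₂ constant or degenerate). -/

import Mathlib

open Filter

/-- The open unit polydisc in `ℂ^d`. -/
def polydisc (d : ℕ) : Set (Fin d → ℂ) := {z | ∀ j, ‖z j‖ < 1}

/-- `F : 𝔻³ → closure 𝔻` has the composed form
`F(z₁,z₂,z₃) = F₁(F₂(z₁,z₂), z₃)` with `F₁, F₂ : 𝔻² → closure 𝔻`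
holomorphic. -/
def IsComposedForm (F : (Fin 3 → ℂ) → ℂ) : Prop :=
  ∃ F₁ F₂ : (Fin 2 → ℂ) → ℂ,
    DifferentiableOn ℂ F₁ (polydisc 2) ∧ (∀ z ∈ polydisc 2, ‖F₁ z‖ ≤ 1) ∧
    DifferentiableOn ℂ F₂ (polydisc 2) ∧ (∀ z ∈ polydisc 2, ‖F₂ z‖ ≤ 1) ∧
    ∀ z ∈ polydisc 3, F z = F₁ ![F₂ ![z 0, z 1], z 2]

section AuxProof

open Filter Metric Set Topology

noncomputable def mob (a u : ℂ) : ℂ := (a - u) / (1 - (starRingEnd ℂ) a * u)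

lemma mob_denom_ne (a u : ℂ) (ha : ‖a‖ < 1) (hu : ‖u‖ ≤ 1) :
    1 - (starRingEnd ℂ) a * u ≠ 0 := by
  intro h
  have h1 : (1 : ℂ) = (starRingEnd ℂ) a * u := by linear_combination h
  have h2 : (1:ℝ) = ‖a‖ * ‖u‖ := by
    calc (1:ℝ) = ‖(starRingEnd ℂ) a * u‖ := by rw [← h1]; simp
    _ = ‖a‖ * ‖u‖ := by rw [norm_mul]; simp
  nlinarith [norm_nonneg u, norm_nonneg a]

lemma mob_key (a u : ℂ) :
    (1 - (starRingEnd ℂ) a * u) * (starRingEnd ℂ) (1 - (starRingEnd ℂ) a * u)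
      - (a - u) * (starRingEnd ℂ) (a - u)
      = (1 - a * (starRingEnd ℂ) a) * (1 - u * (starRingEnd ℂ) u) := by
  simp only [map_sub, map_mul, map_one, Complex.conj_conj]
  ring

lemma mob_normSq (a u : ℂ) :
    Complex.normSq (1 - (starRingEnd ℂ) a * u) - Complex.normSq (a - u)
      = (1 - Complex.normSq a) * (1 - Complex.normSq u) := by
  have := mob_key a u
  rw [Complex.mul_conj, Complex.mul_conj, Complex.mul_conj, Complex.mul_conj] at this
  have h2 : ((Complex.normSq (1 - (starRingEnd ℂ) a * u) - Complex.normSq (a - u) : ℝ) : ℂ)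
      = ((1 - Complex.normSq a) * (1 - Complex.normSq u) : ℝ) := by
    push_cast
    linear_combination this
  exact_mod_cast h2

lemma mob_norm_le (a u : ℂ) (ha : ‖a‖ < 1) (hu : ‖u‖ ≤ 1) : ‖mob a u‖ ≤ 1 := by
  have hd := mob_denom_ne a u ha hu
  rw [mob, norm_div, div_le_one (norm_pos_iff.mpr hd)]
  have h1 : Complex.normSq (a - u) ≤ Complex.normSq (1 - (starRingEnd ℂ) a * u) := by
    have := mob_normSq a u
    have ha' : Complex.normSq a < 1 := by
      rw [← Complex.sq_norm]; nlinarith [norm_nonneg a]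
    have hu' : Complex.normSq u ≤ 1 := by
      rw [← Complex.sq_norm]; nlinarith [norm_nonneg u]
    nlinarith
  rw [Complex.norm_def, Complex.norm_def]
  exact Real.sqrt_le_sqrt h1

lemma mob_norm_lt (a u : ℂ) (ha : ‖a‖ < 1) (hu : ‖u‖ < 1) : ‖mob a u‖ < 1 := by
  have hd := mob_denom_ne a u ha hu.le
  rw [mob, norm_div, div_lt_one (norm_pos_iff.mpr hd)]
  have h1 : Complex.normSq (a - u) < Complex.normSq (1 - (starRingEnd ℂ) a * u) := by
    have := mob_normSq a u
    have ha' : Complex.normSq a < 1 := by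
      rw [← Complex.sq_norm]; nlinarith [norm_nonneg a]
    have hu' : Complex.normSq u < 1 := by
      rw [← Complex.sq_norm]; nlinarith [norm_nonneg u]
    nlinarith
  rw [Complex.norm_def, Complex.norm_def]
  exact Real.sqrt_lt_sqrt (Complex.normSq_nonneg _) h1

lemma mob_mob (a u : ℂ) (ha : ‖a‖ < 1) (hu : ‖u‖ ≤ 1) : mob a (mob a u) = u := by
  have hd := mob_denom_ne a u ha hu
  have hd2 := mob_denom_ne a (mob a u) ha (mob_norm_le a u ha hu)
  simp only [mob] at hd2 ⊢
  rw [div_eq_iff hd2]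
  linear_combination (-(a - u)) * mul_inv_cancel₀ hd

lemma mob_self (a : ℂ) : mob a a = 0 := by simp [mob]

lemma mob_differentiableAt (a u : ℂ) (ha : ‖a‖ < 1) (hu : ‖u‖ ≤ 1) :
    DifferentiableAt ℂ (mob a) u := by
  apply DifferentiableAt.div
  · fun_prop
  · fun_prop
  · exact mob_denom_ne a u ha hu

variable {E : Type*} [NormedAddCommGroup E] [NormedSpace ℂ E]

lemma slice_mem {z v : E} {r : ℝ} (hz : ‖z‖ ≤ r) (hv : ‖v‖ ≤ 1) {t : ℂ}
    (ht : ‖t‖ < 1 - r) : z + t • v ∈ ball (0:E) 1 := by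
  rw [mem_ball_zero_iff]
  calc ‖z + t • v‖ ≤ ‖z‖ + ‖t • v‖ := norm_add_le _ _
    _ ≤ r + ‖t‖ * ‖v‖ := by rw [norm_smul]; gcongr
    _ ≤ r + ‖t‖ * 1 := by gcongr
    _ < 1 := by nlinarith [norm_nonneg t]

lemma slice_diffOn {f : E → ℂ} (hd : DifferentiableOn ℂ f (ball 0 1))
    {z v : E} {r : ℝ} (hz : ‖z‖ ≤ r) (hv : ‖v‖ ≤ 1) :
    DifferentiableOn ℂ (fun t : ℂ => f (z + t • v)) (ball 0 (1 - r)) := by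
  intro t ht
  rw [mem_ball_zero_iff] at ht
  have hmem := slice_mem hz hv ht
  exact ((hd.differentiableAt (isOpen_ball.mem_nhds hmem)).comp t
    (((differentiableAt_id).smul_const v).const_add z)).differentiableWithinAt

lemma slice_hasDerivAt {f : E → ℂ} (hd : DifferentiableOn ℂ f (ball 0 1))
    {z : E} (hz : z ∈ ball (0:E) 1) (v : E) :
    HasDerivAt (fun t : ℂ => f (z + t • v)) (fderiv ℂ f z v) 0 := by
  have hf : HasFDerivAt f (fderiv ℂ f z) z :=
    (hd.differentiableAt (isOpen_ball.mem_nhds hz)).hasFDerivAt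
  have hc : HasDerivAt (fun t : ℂ => z + t • v) v 0 := by
    simpa using ((hasDerivAt_id (0:ℂ)).smul_const v).const_add z
  have hz0 : z + (0:ℂ) • v = z := by simp
  have := HasFDerivAt.comp_hasDerivAt (l := f) 0 (by rwa [hz0]) hc
  simpa [Function.comp_def] using this

lemma norm_fderiv_apply_le {f : E → ℂ} (hd : DifferentiableOn ℂ f (ball 0 1))
    {M : ℝ} (hb : ∀ z ∈ ball (0:E) 1, ‖f z‖ ≤ M) {r : ℝ} (hr : r < 1)
    {z : E} (hz : ‖z‖ ≤ r) {v : E} (hv : ‖v‖ ≤ 1) :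
    ‖fderiv ℂ f z v‖ ≤ 2 * M / (1 - r) := by
  have hr0 : 0 ≤ r := le_trans (norm_nonneg z) hz
  set ρ : ℝ := (1 - r) / 2 with hρdef
  have hρ : 0 < ρ := by simp only [hρdef]; linarith
  have hz1 : z ∈ ball (0:E) 1 := mem_ball_zero_iff.mpr (lt_of_le_of_lt hz hr)
  set g : ℂ → ℂ := fun t => f (z + t • v) with hgdef
  have hder : HasDerivAt g (fderiv ℂ f z v) 0 := slice_hasDerivAt hd hz1 v
  have hsub : closedBall (0:ℂ) ρ ⊆ ball (0:ℂ) (1 - r) :=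
    closedBall_subset_ball (by simp only [hρdef]; linarith)
  calc ‖fderiv ℂ f z v‖ = ‖deriv g 0‖ := by rw [hder.deriv]
    _ = ‖Complex.cderiv ρ g 0‖ := by
        rw [Complex.cderiv_eq_deriv isOpen_ball (slice_diffOn hd hz hv) hρ hsub]
    _ ≤ M / ρ := by
        apply Complex.norm_cderiv_le hρ
        intro w hw
        rw [mem_sphere_zero_iff_norm] at hw
        exact hb _ (slice_mem hz hv (by rw [hw]; simp only [hρdef]; linarith))
    _ = 2 * M / (1 - r) := by rw [hρdef, div_div_eq_mul_div]; ring

lemma norm_fderiv_le' {f : E → ℂ} (hd : DifferentiableOn ℂ f (ball 0 1))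
    {M : ℝ} (hM : 0 ≤ M) (hb : ∀ z ∈ ball (0:E) 1, ‖f z‖ ≤ M) {r : ℝ} (hr : r < 1)
    {z : E} (hz : ‖z‖ ≤ r) :
    ‖fderiv ℂ f z‖ ≤ 2 * M / (1 - r) := by
  have hr0 : 0 ≤ r := le_trans (norm_nonneg z) hz
  apply ContinuousLinearMap.opNorm_le_bound _ (div_nonneg (by linarith) (by linarith))
  intro v
  rcases eq_or_ne v 0 with rfl | hv
  · simp
  · have hvn : (0:ℝ) < ‖v‖ := norm_pos_iff.mpr hv
    set w : E := (‖v‖ : ℂ)⁻¹ • v with hwdef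
    have hw : ‖w‖ ≤ 1 := by
      rw [hwdef, norm_smul, norm_inv, Complex.norm_real, norm_norm,
        inv_mul_cancel₀ hvn.ne']
    have hvw : v = (‖v‖ : ℂ) • w := by
      rw [hwdef, smul_smul, mul_inv_cancel₀ (by exact_mod_cast hvn.ne'), one_smul]
    have hLv : fderiv ℂ f z v = (‖v‖:ℂ) • fderiv ℂ f z w := by
      rw [← map_smul, ← hvw]
    calc ‖fderiv ℂ f z v‖ = ‖v‖ * ‖fderiv ℂ f z w‖ := by
          rw [hLv, norm_smul, Complex.norm_real, norm_norm]
    _ ≤ ‖v‖ * (2 * M / (1 - r)) := by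
          gcongr
          exact norm_fderiv_apply_le hd hb hr hz hw
    _ = 2 * M / (1 - r) * ‖v‖ := by ring

lemma lipschitz_on_closedBall {f : E → ℂ} (hd : DifferentiableOn ℂ f (ball 0 1))
    {M : ℝ} (hM : 0 ≤ M) (hb : ∀ z ∈ ball (0:E) 1, ‖f z‖ ≤ M) {r : ℝ} (hr : r < 1)
    {x y : E} (hx : x ∈ closedBall (0:E) r) (hy : y ∈ closedBall (0:E) r) :
    ‖f y - f x‖ ≤ 2 * M / (1 - r) * ‖y - x‖ := by
  apply Convex.norm_image_sub_le_of_norm_hasFDerivWithin_le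
    (f' := fun z => fderiv ℂ f z) ?_ ?_ (convex_closedBall (0:E) r) hx hy
  · intro z hz
    rw [mem_closedBall_zero_iff] at hz
    exact ((hd.differentiableAt (isOpen_ball.mem_nhds
      (mem_ball_zero_iff.mpr (lt_of_le_of_lt hz hr)))).hasFDerivAt).hasFDerivWithinAt
  · intro z hz
    rw [mem_closedBall_zero_iff] at hz
    exact norm_fderiv_le' hd hM hb hr hz

lemma fderiv_lipschitz {f : E → ℂ} (hd : DifferentiableOn ℂ f (ball 0 1))
    {M : ℝ} (hM : 0 ≤ M) (hb : ∀ z ∈ ball (0:E) 1, ‖f z‖ ≤ M) {r : ℝ} (hr : r < 1)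
    {z w : E} (hz : ‖z‖ ≤ r) (hw : ‖w‖ ≤ r) :
    ‖fderiv ℂ f z - fderiv ℂ f w‖ ≤ 8 * M / (1 - r) ^ 2 * ‖z - w‖ := by
  have hr0 : 0 ≤ r := le_trans (norm_nonneg z) hz
  apply ContinuousLinearMap.opNorm_le_bound _ (by positivity)
  intro v
  rcases eq_or_ne v 0 with rfl | hv
  · simp
  suffices h : ∀ v : E, ‖v‖ ≤ 1 → ‖(fderiv ℂ f z - fderiv ℂ f w) v‖ ≤ 8 * M / (1 - r) ^ 2 * ‖z - w‖ by
    have hvn : (0:ℝ) < ‖v‖ := norm_pos_iff.mpr hv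
    set u : E := (‖v‖ : ℂ)⁻¹ • v with hudef
    have hu : ‖u‖ ≤ 1 := by
      rw [hudef, norm_smul, norm_inv, Complex.norm_real, norm_norm,
        inv_mul_cancel₀ hvn.ne']
    have hvu : v = (‖v‖ : ℂ) • u := by
      rw [hudef, smul_smul, mul_inv_cancel₀ (by exact_mod_cast hvn.ne'), one_smul]
    have hLv : (fderiv ℂ f z - fderiv ℂ f w) v = (‖v‖:ℂ) • (fderiv ℂ f z - fderiv ℂ f w) u := by
      rw [← map_smul, ← hvu]
    calc ‖(fderiv ℂ f z - fderiv ℂ f w) v‖ = ‖v‖ * ‖(fderiv ℂ f z - fderiv ℂ f w) u‖ := by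
          rw [hLv, norm_smul, Complex.norm_real, norm_norm]
      _ ≤ ‖v‖ * (8 * M / (1 - r) ^ 2 * ‖z - w‖) := by gcongr; exact h u hu
      _ = 8 * M / (1 - r) ^ 2 * ‖z - w‖ * ‖v‖ := by ring
  clear hv v
  intro v hv
  set ρ : ℝ := (1 - r) / 2 with hρdef
  have hρ : 0 < ρ := by simp only [hρdef]; linarith
  have hz1 : z ∈ ball (0:E) 1 := mem_ball_zero_iff.mpr (lt_of_le_of_lt hz hr)
  have hw1 : w ∈ ball (0:E) 1 := mem_ball_zero_iff.mpr (lt_of_le_of_lt hw hr)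
  set g : ℂ → ℂ := fun t => f (z + t • v) with hgdef
  set h : ℂ → ℂ := fun t => f (w + t • v) with hhdef
  have hsub : closedBall (0:ℂ) ρ ⊆ ball (0:ℂ) (1 - r) :=
    closedBall_subset_ball (by simp only [hρdef]; linarith)
  have hsub' : sphere (0:ℂ) ρ ⊆ ball (0:ℂ) (1 - r) :=
    fun t ht => hsub (sphere_subset_closedBall ht)
  have hgc : ContinuousOn g (sphere (0:ℂ) ρ) :=
    ((slice_diffOn hd hz hv).continuousOn).mono hsub'
  have hhc : ContinuousOn h (sphere (0:ℂ) ρ) :=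
    ((slice_diffOn hd hw hv).continuousOn).mono hsub'
  have key : (fderiv ℂ f z - fderiv ℂ f w) v = Complex.cderiv ρ (g - h) 0 := by
    rw [Complex.cderiv_sub hρ hgc hhc]
    rw [Complex.cderiv_eq_deriv isOpen_ball (slice_diffOn hd hz hv) hρ hsub,
        Complex.cderiv_eq_deriv isOpen_ball (slice_diffOn hd hw hv) hρ hsub]
    rw [(slice_hasDerivAt hd hz1 v).deriv, (slice_hasDerivAt hd hw1 v).deriv]
    simp
  rw [key]
  have hbound : ∀ t ∈ sphere (0:ℂ) ρ, ‖(g - h) t‖ ≤ 4 * M / (1 - r) * ‖z - w‖ := by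
    intro t ht
    rw [mem_sphere_zero_iff_norm] at ht
    have hr'' : (1 + r) / 2 < 1 := by linarith
    have h1 : z + t • v ∈ closedBall (0:E) ((1 + r)/2) := by
      rw [mem_closedBall_zero_iff]
      calc ‖z + t • v‖ ≤ ‖z‖ + ‖t‖ * ‖v‖ := by
            refine (norm_add_le _ _).trans ?_; rw [norm_smul]
        _ ≤ r + ρ * 1 := by rw [ht]; gcongr
        _ = (1 + r) / 2 := by simp only [hρdef]; ring
    have h2 : w + t • v ∈ closedBall (0:E) ((1 + r)/2) := by
      rw [mem_closedBall_zero_iff]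
      calc ‖w + t • v‖ ≤ ‖w‖ + ‖t‖ * ‖v‖ := by
            refine (norm_add_le _ _).trans ?_; rw [norm_smul]
        _ ≤ r + ρ * 1 := by rw [ht]; gcongr
        _ = (1 + r) / 2 := by simp only [hρdef]; ring
    have := lipschitz_on_closedBall hd hM hb hr'' h2 h1
    have heq : (z + t • v) - (w + t • v) = z - w := by abel
    rw [heq] at this
    calc ‖(g - h) t‖ = ‖f (z + t • v) - f (w + t • v)‖ := rfl
      _ ≤ 2 * M / (1 - (1 + r)/2) * ‖z - w‖ := this
      _ = 4 * M / (1 - r) * ‖z - w‖ := by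
          have : 1 - (1 + r)/2 = (1 - r)/2 := by ring
          rw [this]; field_simp; ring
  calc ‖Complex.cderiv ρ (g - h) 0‖ ≤ (4 * M / (1 - r) * ‖z - w‖) / ρ :=
        Complex.norm_cderiv_le hρ hbound
    _ = 8 * M / (1 - r) ^ 2 * ‖z - w‖ := by
        simp only [hρdef]; field_simp; ring

lemma tendstoUniformlyOn_of_equilipschitz {α W : Type*} [PseudoMetricSpace α]
    [PseudoMetricSpace W] {l : Filter ℕ} [l.NeBot]
    {K : Set α} (hK : IsCompact K) {C : ℝ} (hC : 0 ≤ C) {Fn : ℕ → α → W} {f : α → W}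
    (hlip : ∀ n, ∀ x ∈ K, ∀ y ∈ K, dist (Fn n x) (Fn n y) ≤ C * dist x y)
    (hpt : ∀ x ∈ K, Tendsto (fun n => Fn n x) l (𝓝 (f x))) :
    TendstoUniformlyOn Fn f l K := by
  rw [Metric.tendstoUniformlyOn_iff]
  intro ε hε
  have hflip : ∀ x ∈ K, ∀ y ∈ K, dist (f x) (f y) ≤ C * dist x y := by
    intro x hx y hy
    exact le_of_tendsto ((hpt x hx).dist (hpt y hy))
      (Eventually.of_forall fun n => hlip n x hx y hy)
  set δ := ε / (3 * (C + 1)) with hδdef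
  have hδ : 0 < δ := by positivity
  obtain ⟨T, hTK, hTfin, hTcov⟩ :=
    hK.elim_finite_subcover_image (fun x (_ : x ∈ K) => isOpen_ball (x := x) (ε := δ))
      (fun x hx => mem_biUnion hx (mem_ball_self hδ))
  have hev : ∀ᶠ n in l, ∀ t ∈ T, dist (f t) (Fn n t) < ε / 3 := by
    rw [eventually_all_finite hTfin]
    intro t ht
    have h2 : Tendsto (fun n => dist (f t) (Fn n t)) l (𝓝 0) := by
      simpa [dist_self] using
        (tendsto_const_nhds : Tendsto (fun _ : ℕ => f t) l (𝓝 (f t))).dist (hpt t (hTK ht))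
    exact h2.eventually (gt_mem_nhds (by positivity : (0:ℝ) < ε / 3))
  have key : C * δ < ε / 3 := by
    rw [hδdef, ← mul_div_assoc, div_lt_div_iff₀ (by positivity) (by norm_num : (0:ℝ) < 3)]
    nlinarith [hε]
  filter_upwards [hev] with n hn x hx
  obtain ⟨t, ht, hxt⟩ : ∃ t ∈ T, x ∈ ball t δ := by simpa using hTcov hx
  have htK : t ∈ K := hTK ht
  have hd1 : dist (f x) (f t) ≤ C * δ :=
    (hflip x hx t htK).trans (mul_le_mul_of_nonneg_left (mem_ball.mp hxt).le hC)
  have hd2 : dist (Fn n t) (Fn n x) ≤ C * δ := by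
    refine (hlip n t htK x hx).trans (mul_le_mul_of_nonneg_left ?_ hC)
    rw [dist_comm]; exact (mem_ball.mp hxt).le
  calc dist (f x) (Fn n x) ≤ dist (f x) (f t) + dist (f t) (Fn n t) + dist (Fn n t) (Fn n x) :=
        dist_triangle4 _ _ _ _
    _ < ε := by linarith [key, hn t ht]

lemma ultrafilter_limit {W : Type*} [MetricSpace W] [ProperSpace W]
    (𝒰 : Ultrafilter ℕ) (b : ℕ → W) {M : ℝ} {x₀ : W} (h : ∀ n, dist (b n) x₀ ≤ M) :
    ∃ a, dist a x₀ ≤ M ∧ Tendsto b 𝒰 (𝓝 a) := by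
  have hK : IsCompact (closedBall x₀ M) := isCompact_closedBall _ _
  have hle : ↑(𝒰.map b) ≤ 𝓟 (closedBall x₀ M) := by
    rw [le_principal_iff, Ultrafilter.coe_map, mem_map]
    exact Eventually.of_forall fun n => h n
  obtain ⟨a, haK, ha⟩ := hK.ultrafilter_le_nhds (𝒰.map b) hle
  rw [Ultrafilter.coe_map] at ha
  exact ⟨a, mem_closedBall.mp haK, ha⟩


lemma exists_holomorphic_limit {E : Type*} [NormedAddCommGroup E] [NormedSpace ℂ E]
    [FiniteDimensional ℂ E] (𝒰 : Ultrafilter ℕ) (Fn : ℕ → E → ℂ)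
    (hd : ∀ n, DifferentiableOn ℂ (Fn n) (ball 0 1))
    (hb : ∀ n, ∀ z ∈ ball (0:E) 1, ‖Fn n z‖ ≤ 1) :
    ∃ G : E → ℂ, DifferentiableOn ℂ G (ball 0 1) ∧ (∀ z ∈ ball (0:E) 1, ‖G z‖ ≤ 1) ∧
      ∀ z ∈ ball (0:E) 1, Tendsto (fun n => Fn n z) 𝒰 (𝓝 (G z)) := by
  haveI : ProperSpace E := FiniteDimensional.proper ℂ E
  have hGex : ∀ z ∈ ball (0:E) 1, ∃ a : ℂ, dist a 0 ≤ 1 ∧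
      Tendsto (fun n => Fn n z) 𝒰 (𝓝 a) := by
    intro z hz
    exact ultrafilter_limit 𝒰 _ (fun n => by simpa [dist_zero_right] using hb n z hz)
  choose! G hG1 hG2 using hGex
  have hdex : ∀ z ∈ ball (0:E) 1, ∃ L : E →L[ℂ] ℂ, dist L 0 ≤ 2 * 1 / (1 - ‖z‖) ∧
      Tendsto (fun n => fderiv ℂ (Fn n) z) 𝒰 (𝓝 L) := by
    intro z hz
    have hz' : ‖z‖ < 1 := mem_ball_zero_iff.mp hz
    apply ultrafilter_limit
    intro n
    rw [dist_zero_right]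
    exact norm_fderiv_le' (hd n) one_pos.le (hb n) hz' le_rfl
  choose! G' hG'1 hG'2 using hdex
  have hloc : TendstoLocallyUniformlyOn (fun n z => fderiv ℂ (Fn n) z) G' 𝒰
      (ball (0:E) 1) := by
    rw [tendstoLocallyUniformlyOn_iff_forall_isCompact isOpen_ball]
    intro K hK hKc
    rcases K.eq_empty_or_nonempty with rfl | hne
    · exact tendstoUniformlyOn_empty
    obtain ⟨x₀, hx₀K, hx₀⟩ := hKc.exists_isMaxOn hne continuous_norm.continuousOn
    set r := ‖x₀‖ with hrdef
    have hr1 : r < 1 := mem_ball_zero_iff.mp (hK hx₀K)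
    have hKr : ∀ x ∈ K, ‖x‖ ≤ r := fun x hx => hx₀ hx
    apply tendstoUniformlyOn_of_equilipschitz hKc
      (C := 8 * 1 / (1 - r) ^ 2) (div_nonneg (by norm_num) (sq_nonneg _))
    · intro n x hx y hy
      rw [dist_eq_norm, dist_eq_norm]
      exact fderiv_lipschitz (hd n) one_pos.le (hb n) hr1 (hKr x hx) (hKr y hy)
    · exact fun x hx => hG'2 x (hK hx)
  have hG'd : ∀ x ∈ ball (0:E) 1, HasFDerivAt G (G' x) x :=
    fun x hx => hasFDerivAt_of_tendstoLocallyUniformlyOn isOpen_ball hloc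
      (fun n z hz => ((hd n).differentiableAt (isOpen_ball.mem_nhds hz)).hasFDerivAt)
      (fun z hz => hG2 z hz) hx
  refine ⟨G, fun x hx => (hG'd x hx).differentiableAt.differentiableWithinAt,
    fun z hz => ?_, hG2⟩
  simpa [dist_zero_right] using hG1 z hz
lemma polydisc_eq_ball (d : ℕ) : polydisc d = ball (0 : Fin d → ℂ) 1 := by
  ext z
  simp only [polydisc, mem_setOf_eq, mem_ball_zero_iff]
  rw [pi_norm_lt_iff one_pos]

lemma convex_polydisc (d : ℕ) : Convex ℝ (polydisc d) := by
  rw [polydisc_eq_ball]; exact convex_ball 0 1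


/-- The family of composed-form functions is closed under locally uniform
limits on the tridisc. -/
theorem isComposedForm_closed_under_locally_uniform_limits
    (Fseq : ℕ → (Fin 3 → ℂ) → ℂ)
    (hFseq : ∀ n, IsComposedForm (Fseq n))
    (F : (Fin 3 → ℂ) → ℂ)
    (hlim : TendstoLocallyUniformlyOn Fseq F atTop (polydisc 3)) :
    IsComposedForm F := by
  classical
  choose P₁ P₂ h₁d h₁b h₂d h₂b hcomp using hFseq
  set 𝒰 : Ultrafilter ℕ := Ultrafilter.of atTop with h𝒰def
  have h𝒰 : (𝒰 : Filter ℕ) ≤ (atTop : Filter ℕ) := Ultrafilter.of_le _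
  have h0mem : (0 : Fin 2 → ℂ) ∈ polydisc 2 := fun j => by simp
  set a : ℕ → ℂ := fun n => P₂ n 0 with hadef
  have hptF : ∀ z ∈ polydisc 3, Tendsto (fun n => Fseq n z) 𝒰 (𝓝 (F z)) :=
    fun z hz => (hlim.tendsto_at hz).mono_left h𝒰
  by_cases hS : {n | ‖a n‖ < 1} ∈ 𝒰
  case neg =>
    -- Degenerate case: along 𝒰, the inner functions are unimodular constants,
    -- so F depends only on z 2.
    have hSc : {n | ‖a n‖ < 1}ᶜ ∈ 𝒰 := Ultrafilter.compl_mem_iff_notMem.mpr hS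
    have hconst : ∀ n, ¬‖a n‖ < 1 → ∀ v ∈ polydisc 2, P₂ n v = a n := by
      intro n hn v hv
      have h1 : ‖a n‖ = 1 := le_antisymm (h₂b n 0 h0mem) (not_lt.mp hn)
      have hmax : IsMaxOn (norm ∘ P₂ n) (polydisc 2) 0 := by
        intro x hx
        simp only [Function.comp_apply]
        exact (h₂b n x hx).trans (by rw [← h1])
      have := Complex.eqOn_of_isPreconnected_of_isMaxOn_norm
        (convex_polydisc 2).isPreconnected
        (by rw [polydisc_eq_ball]; exact isOpen_ball) (h₂d n) h0mem hmax hv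
      simpa using this
    have hdep : ∀ z ∈ polydisc 3, F z = F ![0, 0, z 2] := by
      intro z hz
      have hz' : (![0, 0, z 2] : Fin 3 → ℂ) ∈ polydisc 3 := by
        intro j
        fin_cases j <;> simp only [Matrix.cons_val_zero, Matrix.cons_val_one, Matrix.head_cons]
          <;> first | simpa using hz 2 | simp
      have h1 := hptF z hz
      have h2 := hptF _ hz'
      have heq : (fun n => Fseq n ![0,0,z 2]) =ᶠ[(𝒰 : Filter ℕ)] (fun n => Fseq n z) := by
        filter_upwards [hSc] with n hn
        have hn' : ¬‖a n‖ < 1 := hn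
        rw [hcomp n z hz, hcomp n _ hz']
        simp only [Matrix.cons_val_zero, Matrix.cons_val_one, Matrix.head_cons,
          Matrix.cons_val_two, Matrix.tail_cons]
        have e1 : (![z 0, z 1] : Fin 2 → ℂ) ∈ polydisc 2 := by
          intro j
          fin_cases j <;> simpa using hz _
        have e2 : (![(0:ℂ), 0] : Fin 2 → ℂ) ∈ polydisc 2 := by
          intro j; fin_cases j <;> simp
        rw [hconst n hn' _ e1, hconst n hn' _ e2]
      exact tendsto_nhds_unique h1 (h2.congr' heq)
    refine ⟨fun w => if w 0 = 1 then F ![0, 0, w 1] else 0, fun _ => 1, ?_, ?_, ?_, ?_, ?_⟩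
    · have heq : EqOn (fun _ : Fin 2 → ℂ => (0:ℂ))
          (fun w : Fin 2 → ℂ => if w 0 = 1 then F ![0,0,w 1] else 0) (polydisc 2) := by
        intro w hw
        have hne : w 0 ≠ 1 := by
          intro h
          have := hw 0
          rw [h] at this
          simp at this
        simp [hne]
      exact (differentiableOn_const 0).congr heq.symm
    · intro w hw
      have hne : w 0 ≠ 1 := by
        intro h
        have := hw 0
        rw [h] at this
        simp at this
      simp [hne]
    · exact differentiableOn_const 1
    · intro w _; simp
    · intro z hz
      simp only [Matrix.cons_val_zero, Matrix.cons_val_one, Matrix.head_cons, if_pos rfl]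
      exact hdep z hz
  case pos =>
    set B : ℕ → (Fin 2 → ℂ) → ℂ :=
      fun n => if ‖a n‖ < 1 then (fun w => mob (a n) (P₂ n w)) else (fun _ => 0) with hBdef
    set A : ℕ → (Fin 2 → ℂ) → ℂ :=
      fun n => if ‖a n‖ < 1 then (fun w => P₁ n ![mob (a n) (w 0), w 1]) else (fun _ => 0)
      with hAdef
    have hBeq : ∀ n, ‖a n‖ < 1 → B n = fun w => mob (a n) (P₂ n w) := by
      intro n hn; simp only [hBdef]; exact if_pos hn
    have hBeq' : ∀ n, ¬‖a n‖ < 1 → B n = fun _ => 0 := by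
      intro n hn; simp only [hBdef]; exact if_neg hn
    have hAeq : ∀ n, ‖a n‖ < 1 → A n = fun w => P₁ n ![mob (a n) (w 0), w 1] := by
      intro n hn; simp only [hAdef]; exact if_pos hn
    have hAeq' : ∀ n, ¬‖a n‖ < 1 → A n = fun _ => 0 := by
      intro n hn; simp only [hAdef]; exact if_neg hn
    have hpd := polydisc_eq_ball 2
    have hmapsTo : ∀ n, ‖a n‖ < 1 → ∀ w ∈ polydisc 2,
        (![mob (a n) (w 0), w 1] : Fin 2 → ℂ) ∈ polydisc 2 := by
      intro n hn w hw j
      fin_cases j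
      · simpa using mob_norm_lt (a n) (w 0) hn (hw 0)
      · simpa using hw 1
    have hBd : ∀ n, DifferentiableOn ℂ (B n) (polydisc 2) := by
      intro n
      by_cases hn : ‖a n‖ < 1
      · rw [hBeq n hn]
        intro w hw
        have := (mob_differentiableAt (a n) (P₂ n w) hn (h₂b n w hw)).comp_differentiableWithinAt
          w ((h₂d n) w hw)
        simpa [Function.comp_def] using this
      · rw [hBeq' n hn]; exact differentiableOn_const 0
    have hBb : ∀ n, ∀ w ∈ polydisc 2, ‖B n w‖ ≤ 1 := by
      intro n w hw
      by_cases hn : ‖a n‖ < 1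
      · rw [hBeq n hn]
        exact mob_norm_le (a n) (P₂ n w) hn (h₂b n w hw)
      · rw [hBeq' n hn]; simp
    have hAd : ∀ n, DifferentiableOn ℂ (A n) (polydisc 2) := by
      intro n
      by_cases hn : ‖a n‖ < 1
      · rw [hAeq n hn]
        have hinner : DifferentiableOn ℂ
            (fun w : Fin 2 → ℂ => (![mob (a n) (w 0), w 1] : Fin 2 → ℂ)) (polydisc 2) := by
          intro w hw
          rw [differentiableWithinAt_pi]
          intro j
          have hproj : ∀ i : Fin 2, DifferentiableAt ℂ (fun w : Fin 2 → ℂ => w i) w :=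
            fun i => (ContinuousLinearMap.proj (R := ℂ) (φ := fun _ : Fin 2 => ℂ) i).differentiableAt
          fin_cases j
          · simp only [Matrix.cons_val_zero]
            have := ((mob_differentiableAt (a n) (w 0) hn (hw 0).le).comp w (hproj 0))
            exact (by simpa [Function.comp_def] using this : DifferentiableAt ℂ
              (fun w : Fin 2 → ℂ => mob (a n) (w 0)) w).differentiableWithinAt
          · simp only [Matrix.cons_val_one, Matrix.head_cons]
            exact (hproj 1).differentiableWithinAt
        have := DifferentiableOn.comp (h₁d n) hinner (fun w hw => hmapsTo n hn w hw)
        simpa [Function.comp_def] using this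
      · rw [hAeq' n hn]; exact differentiableOn_const 0
    have hAb : ∀ n, ∀ w ∈ polydisc 2, ‖A n w‖ ≤ 1 := by
      intro n w hw
      by_cases hn : ‖a n‖ < 1
      · rw [hAeq n hn]
        exact h₁b n _ (hmapsTo n hn w hw)
      · rw [hAeq' n hn]; simp
    have hkey : ∀ᶠ n in (𝒰 : Filter ℕ), ∀ z ∈ polydisc 3,
        Fseq n z = A n ![B n ![z 0, z 1], z 2] := by
      filter_upwards [hS] with n hn
      intro z hz
      have e1 : (![z 0, z 1] : Fin 2 → ℂ) ∈ polydisc 2 := by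
        intro j; fin_cases j <;> simpa using hz _
      rw [hcomp n z hz, hAeq n hn, hBeq n hn]
      simp only [Matrix.cons_val_zero, Matrix.cons_val_one, Matrix.head_cons]
      rw [mob_mob (a n) _ hn (h₂b n _ e1)]
    obtain ⟨G₁, hG₁d, hG₁b, hG₁t⟩ := exists_holomorphic_limit 𝒰 A
      (fun n => hpd ▸ hAd n) (fun n => hpd ▸ hAb n)
    obtain ⟨G₂, hG₂d, hG₂b, hG₂t⟩ := exists_holomorphic_limit 𝒰 B
      (fun n => hpd ▸ hBd n) (fun n => hpd ▸ hBb n)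
    have hG₂0 : G₂ 0 = 0 := by
      have h1 : Tendsto (fun n => B n 0) 𝒰 (𝓝 (G₂ 0)) := hG₂t 0 (by rw [← hpd]; exact h0mem)
      have h2 : (fun n => B n 0) =ᶠ[(𝒰 : Filter ℕ)] (fun _ => (0:ℂ)) := by
        filter_upwards [hS] with n hn
        rw [hBeq n hn]
        exact mob_self _
      exact tendsto_nhds_unique (h1.congr' h2) tendsto_const_nhds
    have hG₂lt : ∀ v ∈ polydisc 2, ‖G₂ v‖ < 1 := by
      intro v hv
      rcases lt_or_eq_of_le (hG₂b v (by rw [← hpd]; exact hv)) with h | h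
      · exact h
      exfalso
      have hmax : IsMaxOn (norm ∘ G₂) (polydisc 2) v := by
        intro x hx
        simp only [Function.comp_apply]
        rw [h]
        exact hG₂b x (by rw [← hpd]; exact hx)
      have heq := Complex.eqOn_of_isPreconnected_of_isMaxOn_norm
        (convex_polydisc 2).isPreconnected (by rw [hpd]; exact isOpen_ball)
        (by rw [hpd]; exact hG₂d) hv hmax
      have h0 := heq h0mem
      rw [hG₂0] at h0
      simp only [Function.const_apply] at h0
      rw [← h0] at h
      simp at h
    refine ⟨G₁, G₂, by rw [hpd]; exact hG₁d, fun z hz => hG₁b z (by rw [← hpd]; exact hz),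
      by rw [hpd]; exact hG₂d, fun z hz => hG₂b z (by rw [← hpd]; exact hz), ?_⟩
    intro z hz
    set v : Fin 2 → ℂ := ![z 0, z 1] with hvdef
    have hv : v ∈ polydisc 2 := by
      intro j; fin_cases j <;> simpa [hvdef] using hz _
    have hb2 : ‖G₂ v‖ < 1 := hG₂lt v hv
    have hz2 : ‖z 2‖ < 1 := hz 2
    set r : ℝ := max ((1 + ‖G₂ v‖)/2) ‖z 2‖ with hrdef
    have hr1 : r < 1 := max_lt (by linarith) hz2
    have hGv_le : (1 + ‖G₂ v‖)/2 ≤ r := le_max_left _ _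
    have hz2r : ‖z 2‖ ≤ r := le_max_right _ _
    have hr0 : 0 ≤ r := le_trans (norm_nonneg _) hz2r
    set p : Fin 2 → ℂ := ![G₂ v, z 2] with hpdef
    have hpmem : p ∈ polydisc 2 := by
      intro j; fin_cases j
      · simpa [hpdef] using hb2
      · simpa [hpdef] using hz2
    have hBv : Tendsto (fun n => B n v) 𝒰 (𝓝 (G₂ v)) := hG₂t v (by rw [← hpd]; exact hv)
    have hAp : Tendsto (fun n => A n p) 𝒰 (𝓝 (G₁ p)) := hG₁t p (by rw [← hpd]; exact hpmem)
    have h0norm : Tendsto (fun n => ‖B n v - G₂ v‖) 𝒰 (𝓝 0) := by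
      have := (tendsto_sub_nhds_zero_iff.mpr hBv).norm
      simpa using this
    have hev1 : ∀ᶠ n in (𝒰 : Filter ℕ), ‖B n v - G₂ v‖ < (1 - ‖G₂ v‖)/2 :=
      h0norm.eventually (gt_mem_nhds (by linarith))
    have hbound : ∀ᶠ n in (𝒰 : Filter ℕ),
        dist (A n ![B n v, z 2]) (G₁ p)
          ≤ 2 * 1 / (1 - r) * ‖B n v - G₂ v‖ + dist (A n p) (G₁ p) := by
      filter_upwards [hev1] with n hn
      have hBn_le : ‖B n v‖ ≤ (1 + ‖G₂ v‖)/2 := by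
        calc ‖B n v‖ = ‖G₂ v + (B n v - G₂ v)‖ := by congr 1; ring
          _ ≤ ‖G₂ v‖ + ‖B n v - G₂ v‖ := norm_add_le _ _
          _ ≤ (1 + ‖G₂ v‖)/2 := by linarith
      have hq : (![B n v, z 2] : Fin 2 → ℂ) ∈ closedBall (0 : Fin 2 → ℂ) r := by
        rw [mem_closedBall_zero_iff]
        refine (pi_norm_le_iff_of_nonneg hr0).mpr fun j => ?_
        fin_cases j
        · simpa using hBn_le.trans hGv_le
        · simpa using hz2r
      have hp' : p ∈ closedBall (0 : Fin 2 → ℂ) r := by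
        rw [mem_closedBall_zero_iff]
        refine (pi_norm_le_iff_of_nonneg hr0).mpr fun j => ?_
        fin_cases j
        · have hgr : ‖G₂ v‖ ≤ r := by linarith [hGv_le, norm_nonneg (G₂ v)]
          simpa [hpdef] using hgr
        · simpa [hpdef] using hz2r
      have hlips := lipschitz_on_closedBall (hpd ▸ hAd n) one_pos.le
        (fun x hx => hAb n x (by rw [hpd]; exact hx)) hr1 hp' hq
      have hdiff : ‖(![B n v, z 2] : Fin 2 → ℂ) - p‖ ≤ ‖B n v - G₂ v‖ := by
        refine (pi_norm_le_iff_of_nonneg (norm_nonneg _)).mpr fun j => ?_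
        fin_cases j <;> simp [hpdef]
      have hAs : dist (A n ![B n v, z 2]) (A n p) ≤ 2 * 1 / (1 - r) * ‖B n v - G₂ v‖ := by
        rw [dist_eq_norm]
        have hC : (0:ℝ) ≤ 2 * 1 / (1 - r) := by
          apply div_nonneg <;> linarith
        exact hlips.trans (mul_le_mul_of_nonneg_left hdiff hC)
      calc dist (A n ![B n v, z 2]) (G₁ p)
          ≤ dist (A n ![B n v, z 2]) (A n p) + dist (A n p) (G₁ p) := dist_triangle _ _ _
        _ ≤ 2 * 1 / (1 - r) * ‖B n v - G₂ v‖ + dist (A n p) (G₁ p) := by linarith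
    have hto : Tendsto (fun n => dist (A n ![B n v, z 2]) (G₁ p)) 𝒰 (𝓝 0) := by
      apply squeeze_zero' (Eventually.of_forall fun n => dist_nonneg) hbound
      have l1 : Tendsto (fun n => 2 * 1 / (1 - r) * ‖B n v - G₂ v‖) 𝒰 (𝓝 0) := by
        simpa using (tendsto_const_nhds (x := (2 * 1 / (1 - r) : ℝ))).mul h0norm
      have l2 : Tendsto (fun n => dist (A n p) (G₁ p)) 𝒰 (𝓝 0) :=
        tendsto_iff_dist_tendsto_zero.mp hAp
      simpa using l1.add l2
    have hAq : Tendsto (fun n => A n ![B n v, z 2]) 𝒰 (𝓝 (G₁ p)) :=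
      tendsto_iff_dist_tendsto_zero.mpr hto
    have hFz : Tendsto (fun n => Fseq n z) 𝒰 (𝓝 (G₁ p)) := by
      apply hAq.congr'
      filter_upwards [hkey] with n hn
      exact (hn z hz).symm
    exact tendsto_nhds_unique (hptF z hz) hFz

end AuxProof
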